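/- Hemisphere lemma: Let γ : ℝ → EuclideanSpace ℝ (Fin 3) be a continuous curve on [0,1] with γ(0) = γ(1) whose image on [0,1] lies in the unit sphere {x : ‖x‖ = 1}. If the length of γ on [0,1] (its total variation eVariationOn γ (Set.Icc 0 1)) is strictly less than 2π, then γ lies in an open hemisphere: there exists v with ‖v‖ = 1 and ⟪v, γ(t)⟫ > 0 for all t ∈ [0,1]. If the length is at most 2π, then γ lies in a closed hemisphere: there exists v with ‖v‖ = 1 and ⟪v, γ(t)⟫ ≥ 0 for all t ∈ [0,1]. -/

import Mathlib

/-- Comparison angle (model angle for curvature `0`) at `p` between `x` and `y`. -/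
noncomputable def cmpAngle {X : Type*} [MetricSpace X] (p x y : X) : ℝ :=
  Real.arccos ((dist p x ^ 2 + dist p y ^ 2 - dist x y ^ 2) / (2 * dist p x * dist p y))

/-- The CBB(0) four-point comparison: curvature `≥ 0` in the sense of Alexandrov. -/
def CBB0Cmp (X : Type*) [MetricSpace X] : Prop :=
  ∀ p x₁ x₂ x₃ : X, p ≠ x₁ → p ≠ x₂ → p ≠ x₃ →
    cmpAngle p x₁ x₂ + cmpAngle p x₂ x₃ + cmpAngle p x₃ x₁ ≤ 2 * Real.pi

/-- The CAT(0) four-point comparison. -/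
def CAT0Cmp (X : Type*) [MetricSpace X] : Prop :=
  ∀ p₁ p₂ x₁ x₂ : X, p₁ ≠ p₂ → p₁ ≠ x₁ → p₁ ≠ x₂ → p₂ ≠ x₁ → p₂ ≠ x₂ →
    cmpAngle p₁ x₁ x₂ ≤ cmpAngle p₁ p₂ x₁ + cmpAngle p₁ p₂ x₂ ∨
    cmpAngle p₂ x₁ x₂ ≤ cmpAngle p₂ p₁ x₁ + cmpAngle p₂ p₁ x₂

/-- Midpoint characterization of the length condition (for complete spaces). -/
def LengthMid (X : Type*) [MetricSpace X] : Prop :=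
  ∀ x y : X, ∀ ε : ℝ, 0 < ε → ∃ z : X,
    dist x z ≤ dist x y / 2 + ε ∧ dist z y ≤ dist x y / 2 + ε

/-- A geodesic from `p` to `q`, affinely parametrized by `[0,1]`. -/
def IsGeodesicP {X : Type*} [MetricSpace X] (γ : ℝ → X) (p q : X) : Prop :=
  γ 0 = p ∧ γ 1 = q ∧
    ∀ s ∈ Set.Icc (0:ℝ) 1, ∀ t ∈ Set.Icc (0:ℝ) 1, dist (γ s) (γ t) = |s - t| * dist p q

/-- A metrically convex subset: together with any two points it contains
every point lying between them. -/
def MConvexSet {X : Type*} [MetricSpace X] (K : Set X) : Prop :=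
  ∀ x ∈ K, ∀ y ∈ K, ∀ z : X, dist x z + dist z y = dist x y → z ∈ K


open Set Real
open scoped ENNReal RealInnerProductSpace

noncomputable section

namespace HemiAux

abbrev V3 := EuclideanSpace ℝ (Fin 3)

lemma arccos_anti {x y : ℝ} (h : x ≤ y) : Real.arccos y ≤ Real.arccos x := by
  simp only [Real.arccos_eq_pi_div_two_sub_arcsin]
  have := Real.monotone_arcsin h
  linarith

/-- The spherical (angular) distance between two vectors. -/
def sang (x y : V3) : ℝ := Real.arccos ⟪x, y⟫

lemma inner_le_one {x y : V3} (hx : ‖x‖ = 1) (hy : ‖y‖ = 1) : |⟪x, y⟫| ≤ 1 := by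
  have h := abs_real_inner_le_norm x y
  rw [hx, hy] at h; simpa using h

lemma cos_sang {x y : V3} (hx : ‖x‖ = 1) (hy : ‖y‖ = 1) : Real.cos (sang x y) = ⟪x, y⟫ := by
  have h := abs_le.mp (inner_le_one hx hy)
  exact Real.cos_arccos h.1 h.2

lemma sang_nonneg (x y : V3) : 0 ≤ sang x y := Real.arccos_nonneg _
lemma sang_le_pi (x y : V3) : sang x y ≤ π := Real.arccos_le_pi _
lemma sang_comm (x y : V3) : sang x y = sang y x := by rw [sang, sang, real_inner_comm]

lemma sang_self {x : V3} (hx : ‖x‖ = 1) : sang x x = 0 := by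
  rw [sang, real_inner_self_eq_norm_sq, hx]
  norm_num [Real.arccos_one]

lemma chord_eq {x y : V3} (hx : ‖x‖ = 1) (hy : ‖y‖ = 1) :
    ‖x - y‖ = 2 * Real.sin (sang x y / 2) := by
  have hsq : ‖x - y‖ ^ 2 = (2 * Real.sin (sang x y / 2)) ^ 2 := by
    rw [norm_sub_sq_real, hx, hy, mul_pow, Real.sin_sq_eq_half_sub]
    have h2 : 2 * (sang x y / 2) = sang x y := by ring
    rw [h2, cos_sang hx hy]
    ring
  have h2 : 0 ≤ Real.sin (sang x y / 2) :=
    Real.sin_nonneg_of_nonneg_of_le_pi (by linarith [sang_nonneg x y])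
      (by linarith [sang_le_pi x y, Real.pi_pos])
  nlinarith [norm_nonneg (x - y), hsq]

lemma two_div_pi_mul_le_sin {t : ℝ} (h0 : 0 ≤ t) (h1 : t ≤ π / 2) : 2 / π * t ≤ Real.sin t := by
  have hπ := Real.pi_pos
  have hc : ConcaveOn ℝ (Icc 0 π) Real.sin := strictConcaveOn_sin_Icc.concaveOn
  have ha : (0 : ℝ) ∈ Icc (0:ℝ) π := by constructor <;> linarith
  have hb : (π / 2 : ℝ) ∈ Icc (0:ℝ) π := by constructor <;> linarith
  have hca : (0:ℝ) ≤ 1 - 2 / π * t := by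
    have : 2 / π * t ≤ 2 / π * (π / 2) := by
      apply mul_le_mul_of_nonneg_left h1; positivity
    have h2 : 2 / π * (π / 2) = 1 := by field_simp
    linarith
  have hcb : (0:ℝ) ≤ 2 / π * t := by positivity
  have key := hc.2 ha hb hca hcb (by ring)
  have he : (1 - 2 / π * t) • (0:ℝ) + (2 / π * t) • (π / 2) = t := by
    simp only [smul_eq_mul]
    field_simp
    ring
  rw [he] at key
  simpa [smul_eq_mul, Real.sin_pi_div_two] using key

lemma sang_le_chord {x y : V3} (hx : ‖x‖ = 1) (hy : ‖y‖ = 1) :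
    sang x y ≤ π / 2 * ‖x - y‖ := by
  have hπ := Real.pi_pos
  have h := two_div_pi_mul_le_sin (t := sang x y / 2) (by linarith [sang_nonneg x y])
    (by linarith [sang_le_pi x y])
  rw [chord_eq hx hy]
  have := mul_le_mul_of_nonneg_left h (le_of_lt (by positivity : (0:ℝ) < π))
  calc sang x y = π * (2 / π * (sang x y / 2)) := by field_simp
  _ ≤ π * Real.sin (sang x y / 2) := this
  _ = π / 2 * (2 * Real.sin (sang x y / 2)) := by ring

lemma chord_ge {x y : V3} (hx : ‖x‖ = 1) (hy : ‖y‖ = 1) (h1 : sang x y ≤ 1) :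
    sang x y * (1 - sang x y ^ 2 / 16) ≤ ‖x - y‖ := by
  rcases eq_or_lt_of_le (sang_nonneg x y) with h0 | h0
  · rw [← h0]; simp [norm_nonneg]
  · have hs := Real.sin_gt_sub_cube (by linarith : 0 < sang x y / 2)
    rw [chord_eq hx hy]
    nlinarith [hs]

lemma sang_triangle {x y z : V3} (hx : ‖x‖ = 1) (hy : ‖y‖ = 1) (hz : ‖z‖ = 1) :
    sang x z ≤ sang x y + sang y z := by
  set a := sang x y with ha
  set b := sang y z with hb
  by_cases hab : π ≤ a + b
  · linarith [sang_le_pi x z]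
  push_neg at hab
  have ha0 := sang_nonneg x y
  have hb0 := sang_nonneg y z
  have hxy : Real.cos a = ⟪x, y⟫ := cos_sang hx hy
  have hyz : Real.cos b = ⟪y, z⟫ := cos_sang hy hz
  set x' := x - ⟪x, y⟫ • y with hx'def
  set z' := z - ⟪z, y⟫ • y with hz'def
  have hnx' : ‖x'‖ = Real.sin a := by
    have h1 : ‖x'‖ ^ 2 = 1 - ⟪x, y⟫ ^ 2 := by
      rw [hx'def, norm_sub_sq_real, real_inner_smul_right, norm_smul, hx, hy]
      simp [mul_pow]
      ring
    have h2 : Real.sin a = Real.sqrt (1 - ⟪x, y⟫ ^ 2) := Real.sin_arccos _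
    rw [h2, ← h1, Real.sqrt_sq (norm_nonneg _)]
  have hnz' : ‖z'‖ = Real.sin b := by
    have h1 : ‖z'‖ ^ 2 = 1 - ⟪z, y⟫ ^ 2 := by
      rw [hz'def, norm_sub_sq_real, real_inner_smul_right, norm_smul, hz, hy]
      simp [mul_pow]
      ring
    have h2 : Real.sin b = Real.sqrt (1 - ⟪z, y⟫ ^ 2) := by
      rw [hb]
      have h3 : sang y z = Real.arccos ⟪z, y⟫ := sang_comm y z
      rw [h3, Real.sin_arccos]
    rw [h2, ← h1, Real.sqrt_sq (norm_nonneg _)]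
  have hinner : ⟪x, z⟫ = ⟪x, y⟫ * ⟪z, y⟫ + ⟪x', z'⟫ := by
    rw [hx'def, hz'def]
    simp only [inner_sub_left, inner_sub_right, real_inner_smul_left, real_inner_smul_right,
      real_inner_self_eq_norm_sq, hy]
    rw [real_inner_comm y z]
    ring
  have hCS := abs_real_inner_le_norm x' z'
  rw [hnx', hnz'] at hCS
  have hcos : Real.cos (a + b) ≤ ⟪x, z⟫ := by
    rw [Real.cos_add, hinner, hxy, hyz, real_inner_comm z y]
    have := abs_le.mp hCS
    nlinarith [this.1]
  calc sang x z = Real.arccos ⟪x, z⟫ := rfl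
  _ ≤ Real.arccos (Real.cos (a + b)) := arccos_anti hcos
  _ = a + b := Real.arccos_cos (by linarith) (by linarith)

/-- The unit sphere in `ℝ³` with the intrinsic (angular) metric. -/
structure S2 : Type where
  val : V3
  unit : ‖val‖ = 1

instance : PseudoMetricSpace S2 where
  dist x y := sang x.val y.val
  dist_self x := sang_self x.unit
  dist_comm x y := sang_comm _ _
  dist_triangle x y z := sang_triangle x.unit y.unit z.unit

lemma S2.dist_def (x y : S2) : dist x y = sang x.val y.val := rfl
lemma S2.edist_def (x y : S2) : edist x y = ENNReal.ofReal (sang x.val y.val) := by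
  rw [edist_dist]; rfl

/-- Lift a (spherical) curve to the abstract sphere. -/
def lift (γ : ℝ → V3) (t : ℝ) : S2 :=
  if h : ‖γ t‖ = 1 then ⟨γ t, h⟩
  else ⟨EuclideanSpace.single 0 1, by rw [EuclideanSpace.norm_single]; norm_num⟩

lemma lift_val {γ : ℝ → V3} {t : ℝ} (h : ‖γ t‖ = 1) : (lift γ t).val = γ t := by
  rw [lift, dif_pos h]

lemma Icc_add_Icc' {X : Type*} [PseudoEMetricSpace X] (f : ℝ → X) {a b c : ℝ}
    (hab : a ≤ b) (hbc : b ≤ c) :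
    eVariationOn f (Icc a b) + eVariationOn f (Icc b c) = eVariationOn f (Icc a c) := by
  have h := eVariationOn.Icc_add_Icc f (s := Icc a c) hab hbc ⟨hab, hbc⟩
  rw [Icc_inter_Icc, Icc_inter_Icc, Icc_inter_Icc] at h
  simpa [max_self, min_self, max_eq_right hab, min_eq_right hbc] using h

lemma sum_var_le {X : Type*} [PseudoEMetricSpace X] (f : ℝ → X) (u : ℕ → ℝ)
    (hu : Monotone u) (n : ℕ) :
    ∑ i ∈ Finset.range n, eVariationOn f (Icc (u i) (u (i + 1)))
      ≤ eVariationOn f (Icc (u 0) (u n)) := by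
  induction n with
  | zero => simp
  | succ n ih =>
    rw [Finset.sum_range_succ]
    calc ∑ i ∈ Finset.range n, eVariationOn f (Icc (u i) (u (i+1)))
          + eVariationOn f (Icc (u n) (u (n+1)))
        ≤ eVariationOn f (Icc (u 0) (u n)) + eVariationOn f (Icc (u n) (u (n+1))) := by
          exact add_le_add_left ih _
    _ = eVariationOn f (Icc (u 0) (u (n+1))) :=
        Icc_add_Icc' f (hu (Nat.zero_le n)) (hu (Nat.le_succ n))

section Curve
variable {γ : ℝ → V3}

/-- Intrinsic distance is bounded by the chordal variation. -/
lemma dist_le_var (hcont : ContinuousOn γ (Icc 0 1))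
    (hsphere : ∀ t ∈ Icc (0:ℝ) 1, ‖γ t‖ = 1)
    (hfin : eVariationOn γ (Icc (0:ℝ) 1) ≠ ⊤)
    {s t : ℝ} (hs : s ∈ Icc (0:ℝ) 1) (ht : t ∈ Icc (0:ℝ) 1) (hst : s ≤ t) :
    sang (γ s) (γ t) ≤ (eVariationOn γ (Icc s t)).toReal := by
  have hπ := Real.pi_pos
  set W := (eVariationOn γ (Icc s t)).toReal with hW
  have hWfin : eVariationOn γ (Icc s t) ≠ ⊤ :=
    ne_top_of_le_ne_top hfin (eVariationOn.mono γ (Icc_subset_Icc hs.1 ht.2))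
  have hW0 : 0 ≤ W := ENNReal.toReal_nonneg
  suffices H : ∀ η : ℝ, 0 < η → η ≤ 1 → sang (γ s) (γ t) * (1 - η ^ 2 / 16) ≤ W by
    by_contra hlt
    push_neg at hlt
    set D := sang (γ s) (γ t) with hD
    have hD0 : 0 < D := lt_of_le_of_lt hW0 hlt
    have hη0 : 0 < min 1 ((D - W) / D) := by
      apply lt_min one_pos
      apply div_pos (by linarith) hD0
    have := H _ hη0 (min_le_left _ _)
    have hle : min 1 ((D - W) / D) ≤ (D - W) / D := min_le_right _ _
    have hle1 : min 1 ((D - W) / D) ≤ 1 := min_le_left _ _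
    set η := min 1 ((D - W) / D) with hηd
    have hsq : η ^ 2 ≤ (D - W) / D := by nlinarith
    have : D * (1 - ((D - W) / D) / 16) ≤ W := by
      calc D * (1 - ((D - W) / D) / 16) ≤ D * (1 - η ^ 2 / 16) := by
            apply mul_le_mul_of_nonneg_left _ hD0.le
            linarith
      _ ≤ W := H _ hη0 hle1
    have hid : D * (1 - ((D - W) / D) / 16) = D - (D - W) / 16 := by
      field_simp
    rw [hid] at this
    linarith
  intro η hη0 hη1
  -- uniform continuity of γ
  have hUC := (isCompact_Icc.uniformContinuousOn_of_continuous hcont)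
  rw [Metric.uniformContinuousOn_iff_le] at hUC
  obtain ⟨δ, hδ0, hδ⟩ := hUC (2 * η / π) (by positivity)
  obtain ⟨N, hN0, hNδ⟩ : ∃ N : ℕ, 0 < N ∧ (t - s) / N ≤ δ := by
    obtain ⟨N, hN⟩ := exists_nat_gt ((t - s) / δ)
    refine ⟨N + 1, Nat.succ_pos N, ?_⟩
    rw [div_le_iff₀ (by positivity)]
    have h1 : (t - s) / δ ≤ (N:ℝ) + 1 := by push_cast at hN ⊢; linarith
    rw [div_le_iff₀ hδ0] at h1
    calc t - s ≤ ((N:ℝ) + 1) * δ := h1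
    _ = ((N+1 : ℕ):ℝ) * δ := by push_cast; ring
    _ ≤ δ * ((N+1:ℕ):ℝ) := by ring_nf; exact le_rfl
  set u : ℕ → ℝ := fun i => s + (min i N : ℕ) * ((t - s) / N) with hu_def
  have hts : 0 ≤ t - s := by linarith
  have hu_mono : Monotone u := by
    intro i j hij
    have : (min i N : ℕ) ≤ (min j N : ℕ) := min_le_min hij le_rfl
    have := Nat.cast_le (α := ℝ).mpr this
    have h2 : (0:ℝ) ≤ (t - s) / N := by positivity
    simp only [hu_def]
    nlinarith
  have hu_mem : ∀ i, u i ∈ Icc s t := by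
    intro i
    simp only [hu_def]
    constructor
    · have h2 : (0:ℝ) ≤ (t - s) / N := by positivity
      nlinarith [Nat.cast_nonneg (α := ℝ) (min i N)]
    · have h1 : ((min i N : ℕ) : ℝ) ≤ (N : ℕ) := by
        exact_mod_cast Nat.cast_le.mpr (min_le_right i N)
      have h2 : (0:ℝ) ≤ (t - s) / N := by positivity
      have hNne : (N:ℝ) ≠ 0 := by exact_mod_cast hN0.ne'
      have h3 : ((min i N : ℕ) : ℝ) * ((t - s) / N) ≤ (N:ℝ) * ((t - s) / N) := by nlinarith
      have h4 : (N:ℝ) * ((t - s) / N) = t - s := by field_simp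
      linarith
  have hu0 : u 0 = s := by simp [hu_def]
  have huN : u N = t := by
    have hNne : (N:ℝ) ≠ 0 := by exact_mod_cast hN0.ne'
    simp only [hu_def, min_self]
    field_simp
    ring
  have hunit : ∀ i, ‖γ (u i)‖ = 1 := fun i =>
    hsphere _ (Icc_subset_Icc hs.1 ht.2 (hu_mem i))
  have hstep : ∀ i, ‖γ (u i) - γ (u (i+1))‖ ≤ 2 * η / π := by
    intro i
    have h1 : |u i - u (i+1)| ≤ δ := by
      have h2 : u (i+1) - u i ≤ (t - s) / N := by
        have h3 : ((min (i+1) N : ℕ) : ℝ) ≤ ((min i N : ℕ) : ℝ) + 1 := by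
          have h3' : (min (i+1) N : ℕ) ≤ (min i N : ℕ) + 1 := by omega
          exact_mod_cast h3'
        have h4 : (0:ℝ) ≤ (t - s) / N := by positivity
        simp only [hu_def]
        nlinarith
      have h5 : u i ≤ u (i+1) := hu_mono (Nat.le_succ i)
      have h6 : |u i - u (i+1)| = u (i+1) - u i := by
        rw [abs_sub_comm]
        exact abs_of_nonneg (by linarith)
      rw [h6]
      exact le_trans h2 hNδ
    have := hδ (u i) (Icc_subset_Icc hs.1 ht.2 (hu_mem i)) (u (i+1))
      (Icc_subset_Icc hs.1 ht.2 (hu_mem (i+1))) (by rwa [Real.dist_eq])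
    rwa [dist_eq_norm] at this
  have hang : ∀ i, sang (γ (u i)) (γ (u (i+1))) ≤ η := by
    intro i
    calc sang (γ (u i)) (γ (u (i+1))) ≤ π / 2 * ‖γ (u i) - γ (u (i+1))‖ :=
          sang_le_chord (hunit i) (hunit (i+1))
    _ ≤ π / 2 * (2 * η / π) := by
        apply mul_le_mul_of_nonneg_left (hstep i) (by positivity)
    _ = η := by field_simp
  have hsumang : sang (γ s) (γ t) ≤ ∑ i ∈ Finset.range N, sang (γ (u i)) (γ (u (i+1))) := by
    have h1 := dist_le_range_sum_dist (fun i => lift γ (u i)) N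
    have h2 : ∀ i, dist (lift γ (u i)) (lift γ (u (i+1))) = sang (γ (u i)) (γ (u (i+1))) := by
      intro i
      rw [S2.dist_def, lift_val (hunit i), lift_val (hunit (i+1))]
    have h3 : dist (lift γ (u 0)) (lift γ (u N)) = sang (γ s) (γ t) := by
      rw [S2.dist_def, lift_val (hunit 0), lift_val (hunit N), hu0, huN]
    rw [h3] at h1
    calc sang (γ s) (γ t) ≤ ∑ i ∈ Finset.range N, dist (lift γ (u i)) (lift γ (u (i+1))) := h1
    _ = ∑ i ∈ Finset.range N, sang (γ (u i)) (γ (u (i+1))) := Finset.sum_congr rfl fun i _ => h2 i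
  have hsumchord : ∑ i ∈ Finset.range N, ‖γ (u i) - γ (u (i+1))‖ ≤ W := by
    have h1 := eVariationOn.sum_le (f := γ) (n := N) hu_mono hu_mem
    have h2 : ∀ i ∈ Finset.range N, edist (γ (u (i+1))) (γ (u i))
        = ENNReal.ofReal ‖γ (u i) - γ (u (i+1))‖ := by
      intro i _
      rw [edist_dist, dist_eq_norm, norm_sub_rev]
    rw [Finset.sum_congr rfl h2, ← ENNReal.ofReal_sum_of_nonneg
      (fun i _ => norm_nonneg _)] at h1
    exact (ENNReal.ofReal_le_iff_le_toReal hWfin).mp h1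
  have hfac : (0:ℝ) ≤ 1 - η ^ 2 / 16 := by nlinarith
  calc sang (γ s) (γ t) * (1 - η ^ 2 / 16)
      ≤ (∑ i ∈ Finset.range N, sang (γ (u i)) (γ (u (i+1)))) * (1 - η ^ 2 / 16) :=
        mul_le_mul_of_nonneg_right hsumang hfac
  _ = ∑ i ∈ Finset.range N, sang (γ (u i)) (γ (u (i+1))) * (1 - η ^ 2 / 16) :=
        Finset.sum_mul _ _ _
  _ ≤ ∑ i ∈ Finset.range N, ‖γ (u i) - γ (u (i+1))‖ := by
        apply Finset.sum_le_sum
        intro i _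
        have hθη := hang i
        have hθ0 := sang_nonneg (γ (u i)) (γ (u (i+1)))
        have hcg := chord_ge (hunit i) (hunit (i+1)) (le_trans hθη hη1)
        set θ := sang (γ (u i)) (γ (u (i+1))) with hθdef
        have hθsq : θ ^ 2 ≤ η ^ 2 := by nlinarith
        have hmul : θ * θ ^ 2 ≤ θ * η ^ 2 := mul_le_mul_of_nonneg_left hθsq hθ0
        nlinarith [hmul, hcg]
  _ ≤ W := hsumchord

lemma angvar_le_chordvar (hcont : ContinuousOn γ (Icc 0 1))
    (hsphere : ∀ t ∈ Icc (0:ℝ) 1, ‖γ t‖ = 1)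
    (hfin : eVariationOn γ (Icc (0:ℝ) 1) ≠ ⊤) :
    eVariationOn (lift γ) (Icc (0:ℝ) 1) ≤ eVariationOn γ (Icc (0:ℝ) 1) := by
  rw [eVariationOn]
  refine iSup_le ?_
  rintro ⟨n, u, hu, us⟩
  dsimp only
  have step : ∀ i ∈ Finset.range n, edist (lift γ (u (i+1))) (lift γ (u i))
      ≤ eVariationOn γ (Icc (u i) (u (i+1))) := by
    intro i _
    have h1 : sang (γ (u i)) (γ (u (i+1)))
        ≤ (eVariationOn γ (Icc (u i) (u (i+1)))).toReal :=
      dist_le_var hcont hsphere hfin (us i) (us (i+1)) (hu (Nat.le_succ i))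
    have h2 : eVariationOn γ (Icc (u i) (u (i+1))) ≠ ⊤ :=
      ne_top_of_le_ne_top hfin (eVariationOn.mono γ (Icc_subset_Icc (us i).1 (us (i+1)).2))
    rw [S2.edist_def, lift_val (hsphere _ (us (i+1))), lift_val (hsphere _ (us i)),
      sang_comm]
    calc ENNReal.ofReal (sang (γ (u i)) (γ (u (i+1))))
        ≤ ENNReal.ofReal ((eVariationOn γ (Icc (u i) (u (i+1)))).toReal) :=
          ENNReal.ofReal_le_ofReal h1
    _ = eVariationOn γ (Icc (u i) (u (i+1))) := ENNReal.ofReal_toReal h2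
  calc ∑ i ∈ Finset.range n, edist (lift γ (u (i+1))) (lift γ (u i))
      ≤ ∑ i ∈ Finset.range n, eVariationOn γ (Icc (u i) (u (i+1))) :=
        Finset.sum_le_sum step
  _ ≤ eVariationOn γ (Icc (u 0) (u n)) := sum_var_le γ u hu n
  _ ≤ eVariationOn γ (Icc (0:ℝ) 1) := eVariationOn.mono γ (Icc_subset_Icc (us 0).1 (us n).2)

end Curve

section VarCont
variable {X : Type*} [PseudoMetricSpace X] {f : ℝ → X} {a b : ℝ}

lemma small_var_right (hab : a ≤ b)
    (hfin : eVariationOn f (Icc a b) ≠ ⊤) {t : ℝ} (hta : a ≤ t) (htb : t < b)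
    (hc : ∀ ε > (0:ℝ), ∃ δ > (0:ℝ), ∀ u ∈ Icc a b, |u - t| ≤ δ → dist (f u) (f t) ≤ ε)
    {ε : ℝ} (hε : 0 < ε) :
    ∃ t' ∈ Ioc t b, eVariationOn f (Icc t t') ≤ ENNReal.ofReal ε := by
  by_contra hcon
  push_neg at hcon
  obtain ⟨δ, hδ0, hδ⟩ := hc (ε / 4) (by positivity)
  have key : ∀ k : ℕ, ∃ w ∈ Ioc t b,
      ENNReal.ofReal (ε / 2) * k ≤ eVariationOn f (Icc w b) := by
    intro k
    induction k with
    | zero => exact ⟨b, ⟨htb, le_rfl⟩, by simp⟩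
    | succ k ih =>
      obtain ⟨w, hw, hwv⟩ := ih
      set s₁ := min w (t + δ) with hs₁def
      have hs₁t : t < s₁ := lt_min hw.1 (by linarith)
      have hs₁b : s₁ ≤ b := le_trans (min_le_left _ _) hw.2
      have h1 : ENNReal.ofReal ε < eVariationOn f (Icc t s₁) := hcon s₁ ⟨hs₁t, hs₁b⟩
      rw [eVariationOn] at h1
      rw [lt_iSup_iff] at h1
      obtain ⟨⟨n, ⟨u, hu, us⟩⟩, hsum⟩ := h1
      dsimp only at hsum
      have hex : ∃ i, t < u i := by
        by_contra hno
        push_neg at hno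
        have hall : ∀ i, u i = t := fun i => le_antisymm (hno i) (us i).1
        have : ∑ i ∈ Finset.range n, edist (f (u (i+1))) (f (u i)) = 0 := by
          apply Finset.sum_eq_zero
          intro i _
          rw [hall i, hall (i+1), edist_self]
        rw [this] at hsum
        exact absurd hsum (by simp [hε.le, ENNReal.ofReal_pos.mpr hε, not_lt])
      set m := Nat.find hex with hmdef
      have hm : t < u m := Nat.find_spec hex
      have hmlt : ∀ j, j < m → u j = t := fun j hj =>
        le_antisymm (not_lt.mp (Nat.find_min hex hj)) (us j).1
      have hmn : m ≤ n := by
        by_contra hgt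
        push_neg at hgt
        have : ∑ i ∈ Finset.range n, edist (f (u (i+1))) (f (u i)) = 0 := by
          apply Finset.sum_eq_zero
          intro i hi
          rw [Finset.mem_range] at hi
          rw [hmlt i (by omega), hmlt (i+1) (by omega), edist_self]
        rw [this] at hsum
        exact absurd hsum (by simp [ENNReal.ofReal_pos.mpr hε, not_lt])
      have hsplit : ∑ i ∈ Finset.range m, edist (f (u (i+1))) (f (u i))
          + ∑ i ∈ Finset.Ico m n, edist (f (u (i+1))) (f (u i))
          = ∑ i ∈ Finset.range n, edist (f (u (i+1))) (f (u i)) := by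
        rw [Finset.range_eq_Ico, Finset.range_eq_Ico]
        exact Finset.sum_Ico_consecutive (fun i => edist (f (u (i+1))) (f (u i))) (Nat.zero_le m) hmn
      have hfirst : ∑ i ∈ Finset.range m, edist (f (u (i+1))) (f (u i))
          ≤ ENNReal.ofReal (ε / 4) := by
        rcases Nat.eq_zero_or_pos m with hm0 | hm0
        · simp [hm0]
        · obtain ⟨m', hm'⟩ : ∃ m', m = m' + 1 := ⟨m - 1, by omega⟩
          rw [hm', Finset.sum_range_succ]
          have hz : ∑ i ∈ Finset.range m', edist (f (u (i+1))) (f (u i)) = 0 := by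
            apply Finset.sum_eq_zero
            intro i hi
            rw [Finset.mem_range] at hi
            rw [hmlt i (by omega), hmlt (i+1) (by omega), edist_self]
          rw [hz, zero_add, hmlt m' (by omega)]
          rw [edist_dist]
          apply ENNReal.ofReal_le_ofReal
          apply hδ (u (m'+1)) ⟨le_trans hta (us _).1, le_trans (us _).2 hs₁b⟩
          have h5 : u (m'+1) ≤ s₁ := (us _).2
          have h6 : t ≤ u (m'+1) := (us _).1
          rw [abs_of_nonneg (by linarith)]
          have : s₁ ≤ t + δ := min_le_right _ _
          linarith
      have hrest : ENNReal.ofReal (ε / 2)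
          ≤ ∑ i ∈ Finset.Ico m n, edist (f (u (i+1))) (f (u i)) := by
        have h2 : ENNReal.ofReal ε ≤ ENNReal.ofReal (ε / 4)
            + ∑ i ∈ Finset.Ico m n, edist (f (u (i+1))) (f (u i)) := by
          rw [← hsplit] at hsum
          exact le_trans hsum.le (add_le_add_left hfirst _)
        have h3 : ENNReal.ofReal (ε / 4) + ENNReal.ofReal (3 * ε / 4) = ENNReal.ofReal ε := by
          rw [← ENNReal.ofReal_add (by positivity) (by positivity)]
          congr 1
          ring
        rw [← h3] at h2
        have h4 := (ENNReal.add_le_add_iff_left (a := ENNReal.ofReal (ε / 4))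
          ENNReal.ofReal_ne_top).mp h2
        exact le_trans (ENNReal.ofReal_le_ofReal (by linarith)) h4
      have hrest_le : ∑ i ∈ Finset.Ico m n, edist (f (u (i+1))) (f (u i))
          ≤ eVariationOn f (Icc (u m) s₁) := by
        have hmono : Monotone (fun i => u (m + i)) := fun i j hij => hu (by omega)
        have hmem : ∀ i, u (m + i) ∈ Icc (u m) s₁ := fun i =>
          ⟨hu (Nat.le_add_right m i), (us _).2⟩
        have h7 := eVariationOn.sum_le (f := f) (n := n - m) hmono hmem
        have h8 : ∑ i ∈ Finset.Ico m n, edist (f (u (i+1))) (f (u i))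
            = ∑ i ∈ Finset.range (n - m), edist (f (u (m + i + 1))) (f (u (m + i))) := by
          rw [Finset.sum_Ico_eq_sum_range]
        rw [h8]
        have h9 : ∀ i, m + i + 1 = m + (i + 1) := fun i => by omega
        calc ∑ i ∈ Finset.range (n - m), edist (f (u (m + i + 1))) (f (u (m + i)))
            = ∑ i ∈ Finset.range (n - m), edist (f (u (m + (i+1)))) (f (u (m + i))) := by
              apply Finset.sum_congr rfl
              intro i _
              rw [h9]
        _ ≤ eVariationOn f (Icc (u m) s₁) := h7
      refine ⟨u m, ⟨hm, le_trans (us m).2 hs₁b⟩, ?_⟩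
      have hadd : eVariationOn f (Icc (u m) s₁) + eVariationOn f (Icc s₁ b)
          = eVariationOn f (Icc (u m) b) := Icc_add_Icc' f (us m).2 hs₁b
      calc ENNReal.ofReal (ε / 2) * ((k + 1 : ℕ) : ℝ≥0∞)
          = ENNReal.ofReal (ε / 2) * (k : ℝ≥0∞) + ENNReal.ofReal (ε / 2) := by
            push_cast
            ring
      _ ≤ eVariationOn f (Icc w b) + eVariationOn f (Icc (u m) s₁) :=
            add_le_add hwv (le_trans hrest hrest_le)
      _ ≤ eVariationOn f (Icc s₁ b) + eVariationOn f (Icc (u m) s₁) := by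
            apply add_le_add_left
            exact eVariationOn.mono f (Icc_subset_Icc (min_le_left _ _) le_rfl)
      _ = eVariationOn f (Icc (u m) b) := by rw [add_comm, hadd]
  -- conclude
  have hfin' : eVariationOn f (Icc t b) ≠ ⊤ :=
    ne_top_of_le_ne_top hfin (eVariationOn.mono f (Icc_subset_Icc hta le_rfl))
  set M := (eVariationOn f (Icc t b)).toReal with hM
  have hbnd : ∀ k : ℕ, ε / 2 * k ≤ M := by
    intro k
    obtain ⟨w, hw, hwv⟩ := key k
    have h1 : ENNReal.ofReal (ε / 2) * k ≤ eVariationOn f (Icc t b) :=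
      le_trans hwv (eVariationOn.mono f (Icc_subset_Icc hw.1.le le_rfl))
    have h2 := ENNReal.toReal_mono hfin' h1
    rw [ENNReal.toReal_mul, ENNReal.toReal_ofReal (by positivity), ENNReal.toReal_natCast] at h2
    exact h2
  obtain ⟨K, hK⟩ := exists_nat_gt (M / (ε / 2))
  have := hbnd K
  rw [div_lt_iff₀ (by positivity)] at hK
  linarith

lemma small_var_left (hab : a ≤ b)
    (hfin : eVariationOn f (Icc a b) ≠ ⊤) {t : ℝ} (hta : a < t) (htb : t ≤ b)
    (hc : ∀ ε > (0:ℝ), ∃ δ > (0:ℝ), ∀ u ∈ Icc a b, |u - t| ≤ δ → dist (f u) (f t) ≤ ε)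
    {ε : ℝ} (hε : 0 < ε) :
    ∃ t' ∈ Ico a t, eVariationOn f (Icc t' t) ≤ ENNReal.ofReal ε := by
  set φ : ℝ → ℝ := fun x => a + b - x with hφdef
  have hφanti : ∀ s : Set ℝ, AntitoneOn φ s := fun s x _ y _ hxy => by
    simp only [hφdef]
    linarith
  have hφimg : ∀ c d : ℝ, φ '' Icc c d = Icc (a + b - d) (a + b - c) := by
    intro c d
    simp only [hφdef]
    rw [show (fun x => a + b - x) = (fun x => (a+b) - x) from rfl, Set.image_const_sub_Icc]
  set g : ℝ → X := f ∘ φ with hgdef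
  have hgvar : ∀ c d : ℝ, eVariationOn g (Icc c d) = eVariationOn f (Icc (a+b-d) (a+b-c)) := by
    intro c d
    rw [hgdef, eVariationOn.comp_eq_of_antitoneOn f φ (hφanti _), hφimg]
  have hgfin : eVariationOn g (Icc a b) ≠ ⊤ := by
    rw [hgvar]
    have : a + b - b = a := by ring
    have h2 : a + b - a = b := by ring
    rw [this, h2]
    exact hfin
  have hgc : ∀ ε' > (0:ℝ), ∃ δ > (0:ℝ), ∀ u ∈ Icc a b,
      |u - (a + b - t)| ≤ δ → dist (g u) (g (a + b - t)) ≤ ε' := by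
    intro ε' hε'
    obtain ⟨δ, hδ0, hδ⟩ := hc ε' hε'
    refine ⟨δ, hδ0, fun u hu hud => ?_⟩
    have h1 : φ u ∈ Icc a b := ⟨by simp only [hφdef]; linarith [hu.2], by
      simp only [hφdef]; linarith [hu.1]⟩
    have h2 : |φ u - t| ≤ δ := by
      simp only [hφdef]
      rw [show a + b - u - t = -(u - (a + b - t)) by ring, abs_neg]
      exact hud
    have h3 : g (a + b - t) = f t := by
      simp only [hgdef, hφdef, Function.comp_apply]
      norm_num
    rw [h3]
    exact hδ (φ u) h1 h2
  have := small_var_right (f := g) hab hgfin (t := a + b - t)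
    (by linarith) (by linarith) hgc hε
  obtain ⟨t', ht', hvar⟩ := this
  refine ⟨a + b - t', ⟨by linarith [ht'.2], by linarith [ht'.1]⟩, ?_⟩
  have h4 : eVariationOn g (Icc (a+b-t) t') = eVariationOn f (Icc (a+b-t') t) := by
    rw [hgvar]
    congr 1
    ring_nf
  rw [← h4]
  exact hvar

lemma var_continuousOn (hab : a ≤ b)
    (hfin : eVariationOn f (Icc a b) ≠ ⊤)
    (hc : ∀ t ∈ Icc a b, ∀ ε > (0:ℝ), ∃ δ > (0:ℝ), ∀ u ∈ Icc a b,
      |u - t| ≤ δ → dist (f u) (f t) ≤ ε) :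
    ContinuousOn (fun t => (eVariationOn f (Icc a t)).toReal) (Icc a b) := by
  intro t ht
  rw [Metric.continuousWithinAt_iff]
  intro ε hε
  have hfin' : ∀ c d : ℝ, a ≤ c → d ≤ b → eVariationOn f (Icc c d) ≠ ⊤ := fun c d h1 h2 =>
    ne_top_of_le_ne_top hfin (eVariationOn.mono f (Icc_subset_Icc h1 h2))
  -- right side
  obtain ⟨δR, hδR0, hδR⟩ : ∃ δ > (0:ℝ), ∀ y ∈ Icc a b, t ≤ y → y - t ≤ δ →
      (eVariationOn f (Icc t y)).toReal ≤ ε / 2 := by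
    rcases lt_or_ge t b with h | h
    · obtain ⟨t', ht', hvar⟩ := small_var_right hab hfin ht.1 h (hc t ht) (half_pos hε)
      refine ⟨t' - t, by linarith [ht'.1], fun y hy hty hyd => ?_⟩
      have h1 : eVariationOn f (Icc t y) ≤ ENNReal.ofReal (ε/2) :=
        le_trans (eVariationOn.mono f (Icc_subset_Icc le_rfl (by linarith))) hvar
      have h2 := ENNReal.toReal_mono ENNReal.ofReal_ne_top h1
      rwa [ENNReal.toReal_ofReal (by positivity)] at h2
    · refine ⟨1, one_pos, fun y hy hty _ => ?_⟩
      have hyt : y = t := le_antisymm (le_trans hy.2 h) hty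
      rw [hyt]
      rw [Icc_self]
      rw [eVariationOn.subsingleton f subsingleton_singleton]
      simp
      positivity
  -- left side
  obtain ⟨δL, hδL0, hδL⟩ : ∃ δ > (0:ℝ), ∀ y ∈ Icc a b, y ≤ t → t - y ≤ δ →
      (eVariationOn f (Icc y t)).toReal ≤ ε / 2 := by
    rcases lt_or_ge a t with h | h
    · obtain ⟨t', ht', hvar⟩ := small_var_left hab hfin h ht.2 (hc t ht) (half_pos hε)
      refine ⟨t - t', by linarith [ht'.2], fun y hy hty hyd => ?_⟩
      have h1 : eVariationOn f (Icc y t) ≤ ENNReal.ofReal (ε/2) :=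
        le_trans (eVariationOn.mono f (Icc_subset_Icc (by linarith) le_rfl)) hvar
      have h2 := ENNReal.toReal_mono ENNReal.ofReal_ne_top h1
      rwa [ENNReal.toReal_ofReal (by positivity)] at h2
    · refine ⟨1, one_pos, fun y hy hty _ => ?_⟩
      have hyt : y = t := le_antisymm hty (le_trans h hy.1)
      rw [hyt, Icc_self, eVariationOn.subsingleton f subsingleton_singleton]
      simp
      positivity
  refine ⟨min δR δL, lt_min hδR0 hδL0, fun y hy hyd => ?_⟩
  rw [Real.dist_eq] at hyd
  rw [Real.dist_eq]
  rcases le_total t y with hty | hty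
  · have hvadd : eVariationOn f (Icc a t) + eVariationOn f (Icc t y)
        = eVariationOn f (Icc a y) := Icc_add_Icc' f ht.1 hty
    have h1 : (eVariationOn f (Icc a y)).toReal
        = (eVariationOn f (Icc a t)).toReal + (eVariationOn f (Icc t y)).toReal := by
      rw [← hvadd, ENNReal.toReal_add (hfin' a t le_rfl ht.2) (hfin' t y ht.1 hy.2)]
    have h2 : (eVariationOn f (Icc t y)).toReal ≤ ε / 2 := by
      apply hδR y hy hty
      have := abs_lt.mp hyd
      have h3 : min δR δL ≤ δR := min_le_left _ _
      linarith [this.2]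
    rw [h1, show (eVariationOn f (Icc a t)).toReal + (eVariationOn f (Icc t y)).toReal
        - (eVariationOn f (Icc a t)).toReal = (eVariationOn f (Icc t y)).toReal from by ring,
      abs_of_nonneg ENNReal.toReal_nonneg]
    linarith
  · have hvadd : eVariationOn f (Icc a y) + eVariationOn f (Icc y t)
        = eVariationOn f (Icc a t) := Icc_add_Icc' f hy.1 hty
    have h1 : (eVariationOn f (Icc a t)).toReal
        = (eVariationOn f (Icc a y)).toReal + (eVariationOn f (Icc y t)).toReal := by
      rw [← hvadd, ENNReal.toReal_add (hfin' a y le_rfl hy.2) (hfin' y t hy.1 ht.2)]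
    have h2 : (eVariationOn f (Icc y t)).toReal ≤ ε / 2 := by
      apply hδL y hy hty
      have := abs_lt.mp hyd
      have h3 : min δR δL ≤ δL := min_le_right _ _
      linarith [this.1]
    rw [h1, show (eVariationOn f (Icc a y)).toReal
        - ((eVariationOn f (Icc a y)).toReal + (eVariationOn f (Icc y t)).toReal)
        = -(eVariationOn f (Icc y t)).toReal from by ring, abs_neg,
      abs_of_nonneg ENNReal.toReal_nonneg]
    linarith

end VarCont

-- ### new material

section Curve2
variable {γ : ℝ → V3}

lemma hc_lift (hcont : ContinuousOn γ (Icc 0 1))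
    (hsphere : ∀ t ∈ Icc (0:ℝ) 1, ‖γ t‖ = 1) {a b : ℝ} (ha : 0 ≤ a) (hb : b ≤ 1) :
    ∀ t ∈ Icc a b, ∀ ε > (0:ℝ), ∃ δ > (0:ℝ), ∀ u ∈ Icc a b,
      |u - t| ≤ δ → dist (lift γ u) (lift γ t) ≤ ε := by
  intro t ht ε hε
  have hπ := Real.pi_pos
  have ht1 : t ∈ Icc (0:ℝ) 1 := Icc_subset_Icc ha hb ht
  have hcw : ContinuousWithinAt γ (Icc 0 1) t := hcont t ht1
  rw [Metric.continuousWithinAt_iff] at hcw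
  obtain ⟨δ, hδ0, hδ⟩ := hcw (2 * ε / π) (by positivity)
  refine ⟨δ / 2, by positivity, fun u hu hud => ?_⟩
  have hu1 : u ∈ Icc (0:ℝ) 1 := Icc_subset_Icc ha hb hu
  have h1 : dist (γ u) (γ t) < 2 * ε / π := by
    apply hδ hu1
    rw [Real.dist_eq]
    linarith [hud]
  rw [S2.dist_def, lift_val (hsphere u hu1), lift_val (hsphere t ht1)]
  calc sang (γ u) (γ t) ≤ π / 2 * ‖γ u - γ t‖ :=
        sang_le_chord (hsphere u hu1) (hsphere t ht1)
  _ ≤ π / 2 * (2 * ε / π) := by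
      apply mul_le_mul_of_nonneg_left _ (by positivity)
      rw [← dist_eq_norm]
      exact h1.le
  _ = ε := by field_simp

lemma bisect (hcont : ContinuousOn γ (Icc 0 1))
    (hsphere : ∀ t ∈ Icc (0:ℝ) 1, ‖γ t‖ = 1)
    (hAfin : eVariationOn (lift γ) (Icc (0:ℝ) 1) ≠ ⊤) :
    ∃ t₀ ∈ Icc (0:ℝ) 1,
      eVariationOn (lift γ) (Icc 0 t₀)
        = ENNReal.ofReal ((eVariationOn (lift γ) (Icc (0:ℝ) 1)).toReal / 2) ∧
      eVariationOn (lift γ) (Icc t₀ 1)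
        = ENNReal.ofReal ((eVariationOn (lift γ) (Icc (0:ℝ) 1)).toReal / 2) := by
  set L := (eVariationOn (lift γ) (Icc (0:ℝ) 1)).toReal with hLdef
  have hL0 : 0 ≤ L := ENNReal.toReal_nonneg
  have hcontℓ := var_continuousOn (zero_le_one) hAfin (hc_lift hcont hsphere le_rfl le_rfl)
  have hℓ0 : (eVariationOn (lift γ) (Icc (0:ℝ) 0)).toReal = 0 := by
    rw [Icc_self, eVariationOn.subsingleton (lift γ) subsingleton_singleton]
    simp
  have hIVT := intermediate_value_Icc (zero_le_one (α := ℝ)) hcontℓ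
  have hmem : L / 2 ∈ Icc ((eVariationOn (lift γ) (Icc (0:ℝ) 0)).toReal)
      ((eVariationOn (lift γ) (Icc (0:ℝ) 1)).toReal) := by
    rw [hℓ0, ← hLdef]
    exact ⟨by linarith, by linarith⟩
  obtain ⟨t₀, ht₀, hℓt₀⟩ := hIVT hmem
  refine ⟨t₀, ht₀, ?_, ?_⟩
  · have hfin1 : eVariationOn (lift γ) (Icc (0:ℝ) t₀) ≠ ⊤ :=
      ne_top_of_le_ne_top hAfin (eVariationOn.mono _ (Icc_subset_Icc le_rfl ht₀.2))
    rw [← hℓt₀, ENNReal.ofReal_toReal hfin1]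
  · have hfin1 : eVariationOn (lift γ) (Icc (0:ℝ) t₀) ≠ ⊤ :=
      ne_top_of_le_ne_top hAfin (eVariationOn.mono _ (Icc_subset_Icc le_rfl ht₀.2))
    have hadd := Icc_add_Icc' (lift γ) ht₀.1 ht₀.2
    have hv1 : eVariationOn (lift γ) (Icc (0:ℝ) t₀) = ENNReal.ofReal (L / 2) := by
      rw [← hℓt₀, ENNReal.ofReal_toReal hfin1]
    have hA : eVariationOn (lift γ) (Icc (0:ℝ) 1) = ENNReal.ofReal (L / 2)
        + ENNReal.ofReal (L / 2) := by
      rw [← ENNReal.ofReal_add (by linarith) (by linarith),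
        show L / 2 + L / 2 = L from by ring, hLdef, ENNReal.ofReal_toReal hAfin]
    rw [hv1, hA] at hadd
    exact (ENNReal.add_right_inj ENNReal.ofReal_ne_top).mp hadd

lemma arc_bound (hsphere : ∀ t ∈ Icc (0:ℝ) 1, ‖γ t‖ = 1) {a b t₁ : ℝ}
    (h0 : 0 ≤ a) (hb1 : b ≤ 1) (ht : t₁ ∈ Icc a b) :
    ENNReal.ofReal (sang (γ a) (γ t₁) + sang (γ t₁) (γ b))
      ≤ eVariationOn (lift γ) (Icc a b) := by
  have hab : a ≤ b := le_trans ht.1 ht.2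
  have hua : ‖γ a‖ = 1 := hsphere a ⟨h0, le_trans hab hb1⟩
  have hub : ‖γ b‖ = 1 := hsphere b ⟨le_trans h0 hab, hb1⟩
  have hut : ‖γ t₁‖ = 1 := hsphere t₁ ⟨le_trans h0 ht.1, le_trans ht.2 hb1⟩
  rw [ENNReal.ofReal_add (sang_nonneg _ _) (sang_nonneg _ _), ← Icc_add_Icc' (lift γ) ht.1 ht.2]
  apply add_le_add
  · have h1 := eVariationOn.edist_le (lift γ) (show a ∈ Icc a t₁ from ⟨le_rfl, ht.1⟩)
      (show t₁ ∈ Icc a t₁ from ⟨ht.1, le_rfl⟩)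
    rwa [S2.edist_def, lift_val hua, lift_val hut] at h1
  · have h1 := eVariationOn.edist_le (lift γ) (show t₁ ∈ Icc t₁ b from ⟨le_rfl, ht.2⟩)
      (show b ∈ Icc t₁ b from ⟨ht.2, le_rfl⟩)
    rwa [S2.edist_def, lift_val hut, lift_val hub] at h1

end Curve2

lemma exists_unit_orthogonal {p m : V3} (hp : ‖p‖ = 1) (hm : ‖m‖ = 1) :
    ∃ v : V3, ‖v‖ = 1 ∧ ⟪v, p⟫ = 0 ∧ ⟪v, m⟫ = 0 := by
  set K : Submodule ℝ V3 := Submodule.span ℝ ({p, m} : Set V3) with hK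
  have hKne : K ≠ ⊤ := by
    intro htop
    have h1 : Module.finrank ℝ K = Module.finrank ℝ V3 := by
      rw [htop]
      exact finrank_top ℝ V3
    have h2 : Module.finrank ℝ V3 = 3 := by
      simp [finrank_euclideanSpace]
    classical
    haveI : Fintype ({p, m} : Set V3) := (Set.toFinite _).fintype
    have h4 := finrank_span_le_card (R := ℝ) ({p, m} : Set V3)
    have h5 : ({p, m} : Set V3).toFinset.card ≤ 2 := by
      rw [Set.toFinset_insert, Set.toFinset_singleton]
      exact le_trans (Finset.card_insert_le _ _) (by simp)
    rw [← hK] at h4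
    omega
  have hKbot : Kᗮ ≠ ⊥ := by
    intro hbot
    exact hKne (Submodule.orthogonal_eq_bot_iff.mp hbot)
  obtain ⟨w, hwK, hw0⟩ := Submodule.exists_mem_ne_zero_of_ne_bot hKbot
  refine ⟨‖w‖⁻¹ • w, ?_, ?_, ?_⟩
  · rw [norm_smul, norm_inv, norm_norm]
    field_simp [norm_ne_zero_iff.mpr hw0]
  · have h1 : ⟪p, w⟫ = 0 := (Submodule.mem_orthogonal K w).mp hwK p
      (Submodule.subset_span (by simp))
    rw [real_inner_smul_left, real_inner_comm, h1, mul_zero]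
  · have h1 : ⟪m, w⟫ = 0 := (Submodule.mem_orthogonal K w).mp hwK m
      (Submodule.subset_span (by simp))
    rw [real_inner_smul_left, real_inner_comm, h1, mul_zero]

lemma combine_v {p m m' : V3} (hp : ‖p‖ = 1) (hm : ‖m‖ = 1) (hm' : ‖m'‖ = 1)
    (h1 : ⟪p, m⟫ = 0) (h2 : ⟪p, m'⟫ = 0) :
    ∃ v : V3, ‖v‖ = 1 ∧ ⟪v, p⟫ = 0 ∧ 0 ≤ ⟪v, m⟫ ∧ 0 ≤ ⟪v, m'⟫ := by
  by_cases hmm : m + m' = 0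
  · obtain ⟨v, hv1, hv2, hv3⟩ := exists_unit_orthogonal hp hm
    refine ⟨v, hv1, hv2, le_of_eq hv3.symm, ?_⟩
    have hm'eq : m' = -m := by
      have := eq_neg_of_add_eq_zero_right hmm
      exact this
    rw [hm'eq, inner_neg_right, hv3, neg_zero]
  · have hpos : 0 < ‖m + m'‖ := norm_pos_iff.mpr hmm
    refine ⟨‖m + m'‖⁻¹ • (m + m'), ?_, ?_, ?_, ?_⟩
    · rw [norm_smul, norm_inv, norm_norm]
      field_simp
    · have e1 : ⟪m, p⟫ = 0 := by rw [real_inner_comm]; exact h1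
      have e2 : ⟪m', p⟫ = 0 := by rw [real_inner_comm]; exact h2
      rw [real_inner_smul_left, inner_add_left, e1, e2]
      simp
    · have e1 : ⟪m, m⟫ = 1 := by rw [real_inner_self_eq_norm_sq, hm]; norm_num
      have e2 : (-1:ℝ) ≤ ⟪m', m⟫ := by linarith [abs_le.mp (inner_le_one hm' hm) |>.1]
      rw [real_inner_smul_left, inner_add_left, e1]
      apply mul_nonneg (by positivity)
      linarith
    · have e1 : ⟪m', m'⟫ = 1 := by rw [real_inner_self_eq_norm_sq, hm']; norm_num
      have e2 : (-1:ℝ) ≤ ⟪m, m'⟫ := by linarith [abs_le.mp (inner_le_one hm hm') |>.1]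
      rw [real_inner_smul_left, inner_add_left, e1]
      apply mul_nonneg (by positivity)
      linarith

section Main
variable {γ : ℝ → V3}

lemma hemi_strict (hcont : ContinuousOn γ (Icc 0 1)) (hclosed : γ 0 = γ 1)
    (hsphere : ∀ t ∈ Icc (0:ℝ) 1, ‖γ t‖ = 1)
    (h : eVariationOn γ (Icc 0 1) < ENNReal.ofReal (2 * π)) :
    ∃ v : V3, ‖v‖ = 1 ∧ ∀ t ∈ Icc (0:ℝ) 1, (0:ℝ) < ⟪v, γ t⟫ := by
  have hπ := Real.pi_pos
  have hfinγ : eVariationOn γ (Icc (0:ℝ) 1) ≠ ⊤ := h.ne_top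
  have hA_le := angvar_le_chordvar hcont hsphere hfinγ
  have hAfin : eVariationOn (lift γ) (Icc (0:ℝ) 1) ≠ ⊤ := ne_top_of_le_ne_top hfinγ hA_le
  set L := (eVariationOn (lift γ) (Icc (0:ℝ) 1)).toReal with hLdef
  have hL0 : 0 ≤ L := ENNReal.toReal_nonneg
  have hL2π : L < 2 * π := by
    have h1 : eVariationOn (lift γ) (Icc (0:ℝ) 1) < ENNReal.ofReal (2*π) := lt_of_le_of_lt hA_le h
    have h2 := (ENNReal.toReal_lt_toReal hAfin ENNReal.ofReal_ne_top).mpr h1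
    rwa [ENNReal.toReal_ofReal (by positivity)] at h2
  obtain ⟨t₀, ht₀, hv1, hv2⟩ := bisect hcont hsphere hAfin
  rw [← hLdef] at hv1 hv2
  have h01 : (0:ℝ) ∈ Icc (0:ℝ) 1 := ⟨le_rfl, zero_le_one⟩
  have hp := hsphere 0 h01
  have hq := hsphere t₀ ht₀
  have hpq_ang : sang (γ 0) (γ t₀) ≤ L / 2 := by
    have h1 := eVariationOn.edist_le (lift γ)
      (show (0:ℝ) ∈ Icc (0:ℝ) t₀ from ⟨le_rfl, ht₀.1⟩)
      (show t₀ ∈ Icc (0:ℝ) t₀ from ⟨ht₀.1, le_rfl⟩)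
    rw [S2.edist_def, lift_val hp, lift_val hq, hv1] at h1
    exact (ENNReal.ofReal_le_ofReal_iff (by linarith)).mp h1
  have hgt : (-1:ℝ) < ⟪γ 0, γ t₀⟫ := by
    by_contra hle
    push_neg at hle
    have h2 : sang (γ 0) (γ t₀) = π := Real.arccos_of_le_neg_one hle
    linarith
  have hnormsq : ‖γ 0 + γ t₀‖ ^ 2 = 2 + 2 * ⟪γ 0, γ t₀⟫ := by
    rw [norm_add_sq_real, hp, hq]; ring
  have hpos : 0 < ‖γ 0 + γ t₀‖ := by nlinarith [norm_nonneg (γ 0 + γ t₀)]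
  refine ⟨‖γ 0 + γ t₀‖⁻¹ • (γ 0 + γ t₀), ?_, ?_⟩
  · rw [norm_smul, norm_inv, norm_norm]
    field_simp
  intro t ht
  by_contra hle0
  push_neg at hle0
  have hsum0 : ⟪γ 0, γ t⟫ + ⟪γ t₀, γ t⟫ ≤ 0 := by
    have h1 : ⟪(‖γ 0 + γ t₀‖⁻¹ • (γ 0 + γ t₀) : V3), γ t⟫
        = ‖γ 0 + γ t₀‖⁻¹ * (⟪γ 0, γ t⟫ + ⟪γ t₀, γ t⟫) := by
      rw [real_inner_smul_left, inner_add_left]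
    rw [h1] at hle0
    nlinarith [inv_pos.mpr hpos]
  have hkey : π ≤ sang (γ 0) (γ t) + sang (γ t) (γ t₀) := by
    have h2 : ⟪γ t₀, γ t⟫ ≤ -⟪γ 0, γ t⟫ := by linarith
    have h3 : Real.arccos (-⟪γ 0, γ t⟫) ≤ Real.arccos ⟪γ t₀, γ t⟫ := arccos_anti h2
    rw [Real.arccos_neg] at h3
    have h4 : sang (γ t) (γ t₀) = Real.arccos ⟪γ t₀, γ t⟫ := sang_comm _ _
    have h5 : sang (γ 0) (γ t) = Real.arccos ⟪γ 0, γ t⟫ := rfl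
    rw [h4, h5]
    linarith
  rcases le_total t t₀ with htt | htt
  · have hb := arc_bound hsphere (le_refl (0:ℝ)) ht₀.2 (show t ∈ Icc (0:ℝ) t₀ from ⟨ht.1, htt⟩)
    rw [hv1] at hb
    have h6 := (ENNReal.ofReal_le_ofReal_iff (by linarith)).mp hb
    linarith
  · have hb := arc_bound hsphere ht₀.1 (le_refl (1:ℝ)) (show t ∈ Icc t₀ 1 from ⟨htt, ht.2⟩)
    rw [hv2] at hb
    have h6 := (ENNReal.ofReal_le_ofReal_iff (by linarith)).mp hb
    have h7 : sang (γ t₀) (γ t) = sang (γ t) (γ t₀) := sang_comm _ _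
    have h8 : sang (γ t) (γ 1) = sang (γ 0) (γ t) := by rw [← hclosed, sang_comm]
    linarith

lemma taut_arc (hcont : ContinuousOn γ (Icc 0 1))
    (hsphere : ∀ t ∈ Icc (0:ℝ) 1, ‖γ t‖ = 1) {a b : ℝ}
    (ha : 0 ≤ a) (hb : b ≤ 1) (hab : a ≤ b)
    (hvar : eVariationOn (lift γ) (Icc a b) = ENNReal.ofReal π)
    (hends : γ b = -γ a) :
    ∃ m : V3, ‖m‖ = 1 ∧ ⟪γ a, m⟫ = 0 ∧
      ∀ t ∈ Icc a b, γ t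
        = Real.cos ((eVariationOn (lift γ) (Icc a t)).toReal) • γ a
          + Real.sin ((eVariationOn (lift γ) (Icc a t)).toReal) • m := by
  have hπ := Real.pi_pos
  set ℓ : ℝ → ℝ := fun t => (eVariationOn (lift γ) (Icc a t)).toReal with hℓdef
  have hfin_ab : eVariationOn (lift γ) (Icc a b) ≠ ⊤ := by
    rw [hvar]; exact ENNReal.ofReal_ne_top
  have hmem1 : ∀ t ∈ Icc a b, t ∈ Icc (0:ℝ) 1 := fun t ht => Icc_subset_Icc ha hb ht
  have hunit : ∀ t ∈ Icc a b, ‖γ t‖ = 1 := fun t ht => hsphere t (hmem1 t ht)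
  have hua : ‖γ a‖ = 1 := hunit a ⟨le_rfl, hab⟩
  have hub : ‖γ b‖ = 1 := hunit b ⟨hab, le_rfl⟩
  have hfin1 : ∀ t ∈ Icc a b, eVariationOn (lift γ) (Icc a t) ≠ ⊤ := fun t ht =>
    ne_top_of_le_ne_top hfin_ab (eVariationOn.mono _ (Icc_subset_Icc le_rfl ht.2))
  have hfin2 : ∀ t ∈ Icc a b, eVariationOn (lift γ) (Icc t b) ≠ ⊤ := fun t ht =>
    ne_top_of_le_ne_top hfin_ab (eVariationOn.mono _ (Icc_subset_Icc ht.1 le_rfl))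
  have hpq : sang (γ a) (γ b) = π := by
    have h1 : ⟪γ a, γ b⟫ = -1 := by
      rw [hends, inner_neg_right, real_inner_self_eq_norm_sq, hua]
      norm_num
    show Real.arccos _ = π
    rw [h1, Real.arccos_neg_one]
  have hsum : ∀ t ∈ Icc a b, ℓ t + (eVariationOn (lift γ) (Icc t b)).toReal = π := by
    intro t ht
    have h1 := Icc_add_Icc' (lift γ) ht.1 ht.2
    rw [hvar] at h1
    have h2 := congrArg ENNReal.toReal h1
    rw [ENNReal.toReal_add (hfin1 t ht) (hfin2 t ht), ENNReal.toReal_ofReal hπ.le] at h2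
    exact h2
  have hdist1 : ∀ t ∈ Icc a b, sang (γ a) (γ t) ≤ ℓ t := by
    intro t ht
    have h1 := eVariationOn.edist_le (lift γ)
      (show a ∈ Icc a t from ⟨le_rfl, ht.1⟩) (show t ∈ Icc a t from ⟨ht.1, le_rfl⟩)
    rw [S2.edist_def, lift_val hua, lift_val (hunit t ht)] at h1
    exact (ENNReal.ofReal_le_iff_le_toReal (hfin1 t ht)).mp h1
  have hdist2 : ∀ t ∈ Icc a b, sang (γ t) (γ b) ≤ (eVariationOn (lift γ) (Icc t b)).toReal := by
    intro t ht
    have h1 := eVariationOn.edist_le (lift γ)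
      (show t ∈ Icc t b from ⟨le_rfl, ht.2⟩) (show b ∈ Icc t b from ⟨ht.2, le_rfl⟩)
    rw [S2.edist_def, lift_val (hunit t ht), lift_val hub] at h1
    exact (ENNReal.ofReal_le_iff_le_toReal (hfin2 t ht)).mp h1
  have F1 : ∀ t ∈ Icc a b, sang (γ a) (γ t) = ℓ t ∧ sang (γ t) (γ b) = π - ℓ t := by
    intro t ht
    have e1 := hdist1 t ht
    have e2 := hdist2 t ht
    have e3 := hsum t ht
    have e4 : π ≤ sang (γ a) (γ t) + sang (γ t) (γ b) := by
      rw [← hpq]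
      exact sang_triangle hua (hunit t ht) hub
    constructor <;> linarith
  have F2 : ∀ s ∈ Icc a b, ∀ t ∈ Icc a b, s ≤ t → sang (γ s) (γ t) = ℓ t - ℓ s := by
    intro s hs t ht hst
    have e1 : sang (γ s) (γ t) ≤ ℓ t - ℓ s := by
      have h1 := Icc_add_Icc' (lift γ) hs.1 hst
      have h2 : eVariationOn (lift γ) (Icc s t) ≠ ⊤ :=
        ne_top_of_le_ne_top hfin_ab (eVariationOn.mono _ (Icc_subset_Icc hs.1 ht.2))
      have h3 := congrArg ENNReal.toReal h1
      rw [ENNReal.toReal_add (hfin1 s hs) h2] at h3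
      have h4 := eVariationOn.edist_le (lift γ)
        (show s ∈ Icc s t from ⟨le_rfl, hst⟩) (show t ∈ Icc s t from ⟨hst, le_rfl⟩)
      rw [S2.edist_def, lift_val (hunit s hs), lift_val (hunit t ht)] at h4
      have h5 := (ENNReal.ofReal_le_iff_le_toReal h2).mp h4
      have h6 : (eVariationOn (lift γ) (Icc s t)).toReal = ℓ t - ℓ s := by
        show _ = (eVariationOn (lift γ) (Icc a t)).toReal - (eVariationOn (lift γ) (Icc a s)).toReal
        linarith
      linarith
    have e2 : π ≤ sang (γ a) (γ s) + sang (γ s) (γ t) + sang (γ t) (γ b) := by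
      rw [← hpq]
      calc sang (γ a) (γ b) ≤ sang (γ a) (γ s) + sang (γ s) (γ b) :=
            sang_triangle hua (hunit s hs) hub
      _ ≤ sang (γ a) (γ s) + (sang (γ s) (γ t) + sang (γ t) (γ b)) := by
            have := sang_triangle (hunit s hs) (hunit t ht) hub
            linarith
      _ = sang (γ a) (γ s) + sang (γ s) (γ t) + sang (γ t) (γ b) := by ring
    have e3 := (F1 s hs).1
    have e4 := (F1 t ht).2
    linarith
  -- midpoint
  have hcontℓ : ContinuousOn ℓ (Icc a b) :=
    var_continuousOn hab hfin_ab (hc_lift hcont hsphere ha hb)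
  have hℓa : ℓ a = 0 := by
    show (eVariationOn (lift γ) (Icc a a)).toReal = 0
    rw [Icc_self, eVariationOn.subsingleton (lift γ) subsingleton_singleton]
    simp
  have hℓb : ℓ b = π := by
    show (eVariationOn (lift γ) (Icc a b)).toReal = π
    rw [hvar, ENNReal.toReal_ofReal hπ.le]
  obtain ⟨tm, htm, hℓtm⟩ := intermediate_value_Icc hab hcontℓ
    (show π / 2 ∈ Icc (ℓ a) (ℓ b) by rw [hℓa, hℓb]; exact ⟨by linarith, by linarith⟩)
  set m := γ tm with hmdef
  have hm_norm : ‖m‖ = 1 := hunit tm htm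
  have hm_perp : ⟪γ a, m⟫ = 0 := by
    rw [← cos_sang hua hm_norm, (F1 tm htm).1, hℓtm, Real.cos_pi_div_two]
  refine ⟨m, hm_norm, hm_perp, ?_⟩
  intro t ht
  have hsc : ⟪γ a, γ t⟫ = Real.cos (ℓ t) := by
    rw [← cos_sang hua (hunit t ht), (F1 t ht).1]
  have hsm : ⟪m, γ t⟫ = Real.sin (ℓ t) := by
    rcases le_total t tm with hts | hts
    · have h1 : sang (γ t) (γ tm) = π / 2 - ℓ t := by
        rw [F2 t ht tm htm hts, hℓtm]
      have h2 : sang m (γ t) = π / 2 - ℓ t := by rw [sang_comm]; exact h1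
      rw [← cos_sang hm_norm (hunit t ht), h2, Real.cos_pi_div_two_sub]
    · have h1 : sang (γ tm) (γ t) = ℓ t - π / 2 := by
        rw [F2 tm htm t ht hts, hℓtm]
      rw [← cos_sang hm_norm (hunit t ht), h1,
        show ℓ t - π / 2 = -(π / 2 - ℓ t) from by ring, Real.cos_neg,
        Real.cos_pi_div_two_sub]
  have hself : ⟪γ t, γ t⟫ = 1 := by
    rw [real_inner_self_eq_norm_sq, hunit t ht]; norm_num
  have hselfa : ⟪γ a, γ a⟫ = 1 := by
    rw [real_inner_self_eq_norm_sq, hua]; norm_num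
  have hselfm : ⟪m, m⟫ = 1 := by
    rw [real_inner_self_eq_norm_sq, hm_norm]; norm_num
  have hsc' : ⟪γ t, γ a⟫ = Real.cos (ℓ t) := by rw [real_inner_comm]; exact hsc
  have hsm' : ⟪γ t, m⟫ = Real.sin (ℓ t) := by rw [real_inner_comm]; exact hsm
  have hm_perp' : ⟪m, γ a⟫ = 0 := by rw [real_inner_comm]; exact hm_perp
  set u : V3 := γ t - Real.cos (ℓ t) • γ a - Real.sin (ℓ t) • m with hudef
  have huu : ⟪u, u⟫ = 0 := by
    rw [hudef]
    simp only [inner_sub_left, inner_sub_right, real_inner_smul_left, real_inner_smul_right,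
      hself, hselfa, hselfm, hsc, hsc', hsm, hsm', hm_perp, hm_perp']
    nlinarith [Real.sin_sq_add_cos_sq (ℓ t)]
  have hu0 : u = 0 := by
    have := inner_self_eq_zero (𝕜 := ℝ) (x := u)
    exact this.mp huu
  rw [hudef, sub_sub] at hu0
  exact sub_eq_zero.mp hu0

lemma antipodal_case (hcont : ContinuousOn γ (Icc 0 1)) (hclosed : γ 0 = γ 1)
    (hsphere : ∀ t ∈ Icc (0:ℝ) 1, ‖γ t‖ = 1) {t₀ : ℝ} (ht₀ : t₀ ∈ Icc (0:ℝ) 1)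
    (hv1 : eVariationOn (lift γ) (Icc 0 t₀) = ENNReal.ofReal π)
    (hv2 : eVariationOn (lift γ) (Icc t₀ 1) = ENNReal.ofReal π)
    (hqp : γ t₀ = -γ 0) :
    ∃ v : V3, ‖v‖ = 1 ∧ ∀ t ∈ Icc (0:ℝ) 1, (0:ℝ) ≤ ⟪v, γ t⟫ := by
  have hπ := Real.pi_pos
  have hp : ‖γ 0‖ = 1 := hsphere 0 ⟨le_rfl, zero_le_one⟩
  have hq : ‖γ t₀‖ = 1 := hsphere t₀ ht₀
  obtain ⟨m, hm_norm, hm_perp, hdec1⟩ := taut_arc hcont hsphere le_rfl ht₀.2 ht₀.1 hv1 hqp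
  have hends2 : γ 1 = -γ t₀ := by
    rw [← hclosed, hqp, neg_neg]
  obtain ⟨m', hm'_norm, hm'_perp, hdec2⟩ := taut_arc hcont hsphere ht₀.1 le_rfl ht₀.2 hv2 hends2
  have hm'_perp0 : ⟪γ 0, m'⟫ = 0 := by
    have h1 : γ 0 = -γ t₀ := by rw [hqp, neg_neg]
    rw [h1, inner_neg_left, hm'_perp, neg_zero]
  obtain ⟨v, hv_norm, hv_p, hv_m, hv_m'⟩ := combine_v hp hm_norm hm'_norm hm_perp hm'_perp0
  refine ⟨v, hv_norm, ?_⟩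
  intro t ht
  have hv_q : ⟪v, γ t₀⟫ = 0 := by rw [hqp, inner_neg_right, hv_p, neg_zero]
  rcases le_total t t₀ with htt | htt
  · have hdec := hdec1 t ⟨ht.1, htt⟩
    set ℓt := (eVariationOn (lift γ) (Icc 0 t)).toReal with hℓt
    have hrange : 0 ≤ ℓt ∧ ℓt ≤ π := by
      constructor
      · exact ENNReal.toReal_nonneg
      · have h1 : eVariationOn (lift γ) (Icc (0:ℝ) t) ≤ ENNReal.ofReal π := by
          rw [← hv1]
          exact eVariationOn.mono _ (Icc_subset_Icc le_rfl htt)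
        have h2 := ENNReal.toReal_mono ENNReal.ofReal_ne_top h1
        rwa [ENNReal.toReal_ofReal hπ.le] at h2
    rw [hdec, inner_add_right, real_inner_smul_right, real_inner_smul_right, hv_p]
    have hs := Real.sin_nonneg_of_nonneg_of_le_pi hrange.1 hrange.2
    have := mul_nonneg hs hv_m
    nlinarith
  · have hdec := hdec2 t ⟨htt, ht.2⟩
    set rt := (eVariationOn (lift γ) (Icc t₀ t)).toReal with hrt
    have hrange : 0 ≤ rt ∧ rt ≤ π := by
      constructor
      · exact ENNReal.toReal_nonneg
      · have h1 : eVariationOn (lift γ) (Icc t₀ t) ≤ ENNReal.ofReal π := by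
          rw [← hv2]
          exact eVariationOn.mono _ (Icc_subset_Icc le_rfl ht.2)
        have h2 := ENNReal.toReal_mono ENNReal.ofReal_ne_top h1
        rwa [ENNReal.toReal_ofReal hπ.le] at h2
    rw [hdec, inner_add_right, real_inner_smul_right, real_inner_smul_right, hv_q]
    have hs := Real.sin_nonneg_of_nonneg_of_le_pi hrange.1 hrange.2
    have := mul_nonneg hs hv_m'
    nlinarith

lemma hemi_closed (hcont : ContinuousOn γ (Icc 0 1)) (hclosed : γ 0 = γ 1)
    (hsphere : ∀ t ∈ Icc (0:ℝ) 1, ‖γ t‖ = 1)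
    (h : eVariationOn γ (Icc 0 1) ≤ ENNReal.ofReal (2 * π)) :
    ∃ v : V3, ‖v‖ = 1 ∧ ∀ t ∈ Icc (0:ℝ) 1, (0:ℝ) ≤ ⟪v, γ t⟫ := by
  have hπ := Real.pi_pos
  have hfinγ : eVariationOn γ (Icc (0:ℝ) 1) ≠ ⊤ :=
    ne_top_of_le_ne_top ENNReal.ofReal_ne_top h
  have hA_le := angvar_le_chordvar hcont hsphere hfinγ
  have hAfin : eVariationOn (lift γ) (Icc (0:ℝ) 1) ≠ ⊤ := ne_top_of_le_ne_top hfinγ hA_le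
  set L := (eVariationOn (lift γ) (Icc (0:ℝ) 1)).toReal with hLdef
  have hL0 : 0 ≤ L := ENNReal.toReal_nonneg
  have hL2π : L ≤ 2 * π := by
    have h1 : eVariationOn (lift γ) (Icc (0:ℝ) 1) ≤ ENNReal.ofReal (2*π) := le_trans hA_le h
    have h2 := ENNReal.toReal_mono ENNReal.ofReal_ne_top h1
    rwa [ENNReal.toReal_ofReal (by positivity)] at h2
  obtain ⟨t₀, ht₀, hv1, hv2⟩ := bisect hcont hsphere hAfin
  rw [← hLdef] at hv1 hv2
  have h01 : (0:ℝ) ∈ Icc (0:ℝ) 1 := ⟨le_rfl, zero_le_one⟩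
  have hp := hsphere 0 h01
  have hq := hsphere t₀ ht₀
  have hpq_ang : sang (γ 0) (γ t₀) ≤ L / 2 := by
    have h1 := eVariationOn.edist_le (lift γ)
      (show (0:ℝ) ∈ Icc (0:ℝ) t₀ from ⟨le_rfl, ht₀.1⟩)
      (show t₀ ∈ Icc (0:ℝ) t₀ from ⟨ht₀.1, le_rfl⟩)
    rw [S2.edist_def, lift_val hp, lift_val hq, hv1] at h1
    exact (ENNReal.ofReal_le_ofReal_iff (by linarith)).mp h1
  by_cases hgt : (-1:ℝ) < ⟪γ 0, γ t₀⟫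
  · -- non-antipodal: same argument as strict case with strict arccos
    have hnormsq : ‖γ 0 + γ t₀‖ ^ 2 = 2 + 2 * ⟪γ 0, γ t₀⟫ := by
      rw [norm_add_sq_real, hp, hq]; ring
    have hpos : 0 < ‖γ 0 + γ t₀‖ := by nlinarith [norm_nonneg (γ 0 + γ t₀)]
    refine ⟨‖γ 0 + γ t₀‖⁻¹ • (γ 0 + γ t₀), ?_, ?_⟩
    · rw [norm_smul, norm_inv, norm_norm]
      field_simp
    intro t ht
    by_contra hle0
    push_neg at hle0
    have hut : ‖γ t‖ = 1 := hsphere t ht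
    have hsum0 : ⟪γ 0, γ t⟫ + ⟪γ t₀, γ t⟫ < 0 := by
      have h1 : ⟪(‖γ 0 + γ t₀‖⁻¹ • (γ 0 + γ t₀) : V3), γ t⟫
          = ‖γ 0 + γ t₀‖⁻¹ * (⟪γ 0, γ t⟫ + ⟪γ t₀, γ t⟫) := by
        rw [real_inner_smul_left, inner_add_left]
      rw [h1] at hle0
      nlinarith [inv_pos.mpr hpos]
    have hkey : π < sang (γ 0) (γ t) + sang (γ t) (γ t₀) := by
      have h2 : ⟪γ t₀, γ t⟫ < -⟪γ 0, γ t⟫ := by linarith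
      have hmem1 : ⟪γ t₀, γ t⟫ ∈ Icc (-1:ℝ) 1 := abs_le.mp (inner_le_one hq hut)
      have hmem2 : -⟪γ 0, γ t⟫ ∈ Icc (-1:ℝ) 1 := by
        have := abs_le.mp (inner_le_one hp hut)
        exact ⟨by linarith [this.2], by linarith [this.1]⟩
      have h3 : Real.arccos (-⟪γ 0, γ t⟫) < Real.arccos ⟪γ t₀, γ t⟫ :=
        Real.strictAntiOn_arccos hmem1 hmem2 h2
      rw [Real.arccos_neg] at h3
      have h4 : sang (γ t) (γ t₀) = Real.arccos ⟪γ t₀, γ t⟫ := sang_comm _ _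
      have h5 : sang (γ 0) (γ t) = Real.arccos ⟪γ 0, γ t⟫ := rfl
      rw [h4, h5]
      linarith
    rcases le_total t t₀ with htt | htt
    · have hb := arc_bound hsphere (le_refl (0:ℝ)) ht₀.2
        (show t ∈ Icc (0:ℝ) t₀ from ⟨ht.1, htt⟩)
      rw [hv1] at hb
      have h6 := (ENNReal.ofReal_le_ofReal_iff (by linarith)).mp hb
      linarith
    · have hb := arc_bound hsphere ht₀.1 (le_refl (1:ℝ))
        (show t ∈ Icc t₀ 1 from ⟨htt, ht.2⟩)
      rw [hv2] at hb
      have h6 := (ENNReal.ofReal_le_ofReal_iff (by linarith)).mp hb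
      have h7 : sang (γ t₀) (γ t) = sang (γ t) (γ t₀) := sang_comm _ _
      have h8 : sang (γ t) (γ 1) = sang (γ 0) (γ t) := by rw [← hclosed, sang_comm]
      linarith
  · -- antipodal
    push_neg at hgt
    have hc1 : ⟪γ 0, γ t₀⟫ = -1 :=
      le_antisymm hgt (by linarith [abs_le.mp (inner_le_one hp hq) |>.1])
    have hqp : γ t₀ = -γ 0 := by
      have h1 : ‖γ 0 + γ t₀‖ ^ 2 = 0 := by
        rw [norm_add_sq_real, hp, hq, hc1]; ring
      have h2 : γ 0 + γ t₀ = 0 := by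
        have h3 : ‖γ 0 + γ t₀‖ = 0 := by
          have := sq_eq_zero_iff.mp h1
          exact this
        exact norm_eq_zero.mp h3
      have := eq_neg_of_add_eq_zero_right h2
      rw [this]
    have hsangπ : sang (γ 0) (γ t₀) = π := by
      show Real.arccos _ = π
      rw [hc1, Real.arccos_neg_one]
    have hLeq : L / 2 = π := le_antisymm (by linarith) (by rw [← hsangπ]; exact hpq_ang)
    rw [hLeq] at hv1 hv2
    exact antipodal_case hcont hclosed hsphere ht₀ hv1 hv2 hqp

end Main
end HemiAux

end

theorem hemisphere_lemma (γ : ℝ → EuclideanSpace ℝ (Fin 3))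
    (hcont : ContinuousOn γ (Set.Icc 0 1)) (hclosed : γ 0 = γ 1)
    (hsphere : ∀ t ∈ Set.Icc (0:ℝ) 1, ‖γ t‖ = 1) :
    (eVariationOn γ (Set.Icc 0 1) < ENNReal.ofReal (2 * Real.pi) →
      ∃ v : EuclideanSpace ℝ (Fin 3), ‖v‖ = 1 ∧
        ∀ t ∈ Set.Icc (0:ℝ) 1, (0:ℝ) < inner ℝ v (γ t)) ∧
    (eVariationOn γ (Set.Icc 0 1) ≤ ENNReal.ofReal (2 * Real.pi) →
      ∃ v : EuclideanSpace ℝ (Fin 3), ‖v‖ = 1 ∧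
        ∀ t ∈ Set.Icc (0:ℝ) 1, (0:ℝ) ≤ inner ℝ v (γ t)) :=
  ⟨fun h => HemiAux.hemi_strict hcont hclosed hsphere h,
   fun h => HemiAux.hemi_closed hcont hclosed hsphere h⟩
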